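/- Let Z : I → ℝ^d be a C¹ function on a compact set I ⊆ ℝ^d and u ∈ ℝ^d. Suppose (a) for every t with Z(t) = u, the smallest singular value of Z'(t) is at least Δ > 0, and (b) the modulus of continuity of Z' on I satisfies ω_{Z'}(η) < Δ/d for some η > 0. Then any two distinct roots t₁, t₂ of Z(t) = u such that the segment [t₁, t₂] is contained in I satisfy ‖t₁ - t₂‖ > η. -/

import Mathlib

open scoped RealInnerProductSpace

lemma piLp_sum_apply {d : ℕ} (f : Fin d → EuclideanSpace ℝ (Fin d)) (j : Fin d) :
    (∑ k, f k) j = ∑ k, f k j := by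
  induction (Finset.univ : Finset (Fin d)) using Finset.induction with
  | empty => rfl
  | @insert a s h ih => rw [Finset.sum_insert h, Finset.sum_insert h, ← ih]; rfl

lemma clm_apply_eq_sum {d : ℕ} (L : EuclideanSpace ℝ (Fin d) →L[ℝ] EuclideanSpace ℝ (Fin d))
    (v : EuclideanSpace ℝ (Fin d)) (i : Fin d) :
    L v i = ∑ k, v k * L (EuclideanSpace.single k 1) i := by
  have hv : v = ∑ k, v k • EuclideanSpace.single k 1 := by
    ext j
    rw [piLp_sum_apply]
    simp [EuclideanSpace.single_apply]
  calc L v i = L (∑ k, v k • EuclideanSpace.single k 1) i := by rw [← hv]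
    _ = (∑ k, v k • L (EuclideanSpace.single k 1)) i := by rw [map_sum]; simp [map_smul]
    _ = ∑ k, v k * L (EuclideanSpace.single k 1) i := by
        rw [piLp_sum_apply]; rfl

/-- Lemma 2.2: separation of roots. -/
theorem stmt_0 {d : ℕ} (Z : EuclideanSpace ℝ (Fin d) → EuclideanSpace ℝ (Fin d))
    (I : Set (EuclideanSpace ℝ (Fin d))) (hI : IsCompact I)
    (hZ : ContDiff ℝ 1 Z) (u : EuclideanSpace ℝ (Fin d))
    (Δ η : ℝ) (hΔ : 0 < Δ) (hη : 0 < η)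
    -- (a) smallest singular value of Z'(t) at roots is at least Δ
    (ha : ∀ t ∈ I, Z t = u → ∀ v : EuclideanSpace ℝ (Fin d),
      Δ * ‖v‖ ≤ ‖fderiv ℝ Z t v‖)
    -- (b) the modulus of continuity of the entries of Z' at scale η is < Δ/d
    (hb : ∀ s ∈ I, ∀ t ∈ I, ‖s - t‖ ≤ η → ∀ i k : Fin d,
      |fderiv ℝ Z s (EuclideanSpace.single k 1) i
        - fderiv ℝ Z t (EuclideanSpace.single k 1) i| < Δ / d)
    (t₁ t₂ : EuclideanSpace ℝ (Fin d)) (ht₁ : t₁ ∈ I) (ht₂ : t₂ ∈ I)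
    (hne : t₁ ≠ t₂) (hZ₁ : Z t₁ = u) (hZ₂ : Z t₂ = u)
    (hseg : segment ℝ t₁ t₂ ⊆ I) :
    η < ‖t₁ - t₂‖ := by
  by_contra hcon
  push_neg at hcon
  set v : EuclideanSpace ℝ (Fin d) := t₂ - t₁ with hvdef
  have hv0 : v ≠ 0 := sub_ne_zero.mpr (Ne.symm hne)
  have hnv : 0 < ‖v‖ := norm_pos_iff.mpr hv0
  have hvη : ‖v‖ ≤ η := by rwa [show ‖v‖ = ‖t₁ - t₂‖ from norm_sub_rev _ _]
  have hd0 : 0 < (d : ℝ) := by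
    rcases Nat.eq_zero_or_pos d with h | h
    · exfalso; apply hne; subst h; ext i; exact i.elim0
    · exact_mod_cast h
  have hdZ : Differentiable ℝ Z := hZ.differentiable one_ne_zero
  set γ : ℝ → EuclideanSpace ℝ (Fin d) := fun s => t₁ + s • v with hγdef
  have hγ01 : ∀ s ∈ Set.Icc (0:ℝ) 1, γ s ∈ I := by
    intro s hs
    apply hseg
    rw [segment_eq_image']
    exact ⟨s, hs, rfl⟩
  have hγderiv : ∀ s : ℝ, HasDerivAt γ v s := by
    intro s
    have : HasDerivAt (fun s : ℝ => s • v) ((1:ℝ) • v) s :=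
      (hasDerivAt_id s).smul_const v
    have h2 := this.const_add t₁
    rw [one_smul] at h2
    exact h2
  -- Rolle for each component
  have key : ∀ i : Fin d, ∃ c ∈ Set.Ioo (0:ℝ) 1, (fderiv ℝ Z (γ c)) v i = 0 := by
    intro i
    have hderiv : ∀ s : ℝ, HasDerivAt (fun s => Z (γ s) i) ((fderiv ℝ Z (γ s)) v i) s := by
      intro s
      have h1 : HasDerivAt (fun s => Z (γ s)) ((fderiv ℝ Z (γ s)) v) s :=
        (hdZ (γ s)).hasFDerivAt.comp_hasDerivAt s (hγderiv s)
      exact ((EuclideanSpace.proj i).hasFDerivAt.comp_hasDerivAt s h1 : _)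
    have hfc : ContinuousOn (fun s => Z (γ s) i) (Set.Icc (0:ℝ) 1) :=
      fun s _ => ((hderiv s).continuousAt).continuousWithinAt
    have hI01 : (fun s => Z (γ s) i) 0 = (fun s => Z (γ s) i) 1 := by
      have h0 : γ 0 = t₁ := by simp [hγdef]
      have h1 : γ 1 = t₂ := by simp [hγdef, hvdef]
      simp [h0, h1, hZ₁, hZ₂]
    exact exists_hasDerivAt_eq_zero one_pos hfc hI01 (fun s _ => hderiv s)
  choose c hc hzero using key
  -- per-component bound on (fderiv Z t₁) v
  have hcomp : ∀ i : Fin d, |(fderiv ℝ Z t₁) v i| < Δ / d * ∑ k, |v k| := by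
    intro i
    have hpI : γ (c i) ∈ I := hγ01 _ (Set.mem_Icc_of_Ioo (hc i))
    have hpd : ‖γ (c i) - t₁‖ ≤ η := by
      have : γ (c i) - t₁ = (c i) • v := by simp [hγdef]
      rw [this, norm_smul]
      calc ‖c i‖ * ‖v‖ ≤ 1 * ‖v‖ := by
            apply mul_le_mul_of_nonneg_right _ (norm_nonneg _)
            rw [Real.norm_eq_abs, abs_of_pos (hc i).1]
            exact le_of_lt (hc i).2
        _ = ‖v‖ := one_mul _
        _ ≤ η := hvη
    have hb' := hb (γ (c i)) hpI t₁ ht₁ hpd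
    have e1 : (fderiv ℝ Z t₁) v i
        = ∑ k, v k * ((fderiv ℝ Z t₁) (EuclideanSpace.single k 1) i
            - (fderiv ℝ Z (γ (c i))) (EuclideanSpace.single k 1) i) := by
      have h2 := clm_apply_eq_sum (fderiv ℝ Z (γ (c i))) v i
      have h1 := clm_apply_eq_sum (fderiv ℝ Z t₁) v i
      have h2' : ∑ k, v k * (fderiv ℝ Z (γ (c i))) (EuclideanSpace.single k 1) i = 0 :=
        h2.symm.trans (hzero i)
      rw [h1, ← sub_zero (∑ k, v k * (fderiv ℝ Z t₁) (EuclideanSpace.single k 1) i), ← h2',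
        ← Finset.sum_sub_distrib]
      exact Finset.sum_congr rfl fun k _ => by ring
    rw [e1]
    obtain ⟨k₀, hk₀⟩ : ∃ k, v k ≠ 0 := by
      by_contra h
      push_neg at h
      exact hv0 (by ext k; exact h k)
    calc |∑ k, v k * ((fderiv ℝ Z t₁) (EuclideanSpace.single k 1) i
            - (fderiv ℝ Z (γ (c i))) (EuclideanSpace.single k 1) i)|
        ≤ ∑ k, |v k| * |(fderiv ℝ Z t₁) (EuclideanSpace.single k 1) i
            - (fderiv ℝ Z (γ (c i))) (EuclideanSpace.single k 1) i| := by
          refine (Finset.abs_sum_le_sum_abs _ _).trans_eq ?_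
          congr 1; ext k; rw [abs_mul]
      _ < ∑ k, |v k| * (Δ / d) := by
          apply Finset.sum_lt_sum
          · intro k _
            apply mul_le_mul_of_nonneg_left _ (abs_nonneg _)
            rw [abs_sub_comm]
            exact le_of_lt (hb' i k)
          · refine ⟨k₀, Finset.mem_univ _, ?_⟩
            apply mul_lt_mul_of_pos_left _ (abs_pos.mpr hk₀)
            rw [abs_sub_comm]
            exact hb' i k₀
      _ = Δ / d * ∑ k, |v k| := by rw [← Finset.sum_mul]; ring
  -- conclude
  set S : ℝ := ∑ k, |v k| with hSdef
  have hS2 : S ^ 2 ≤ d * ‖v‖ ^ 2 := by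
    have h1 : S ^ 2 ≤ ((Finset.univ : Finset (Fin d)).card : ℝ) * ∑ k, |v k| ^ 2 := by
      have := sq_sum_le_card_mul_sum_sq (s := (Finset.univ : Finset (Fin d))) (f := fun k => |v k|)
      exact_mod_cast this
    have h2 : ∑ k, |v k| ^ 2 = ‖v‖ ^ 2 := by
      rw [EuclideanSpace.norm_eq, Real.sq_sqrt (by positivity)]
      simp [Real.norm_eq_abs]
    rw [h2] at h1
    simpa using h1
  have hnorm2 : ‖(fderiv ℝ Z t₁) v‖ ^ 2 < Δ ^ 2 * ‖v‖ ^ 2 := by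
    have h1 : ‖(fderiv ℝ Z t₁) v‖ ^ 2 = ∑ i, ((fderiv ℝ Z t₁) v i) ^ 2 := by
      rw [EuclideanSpace.norm_eq, Real.sq_sqrt (by positivity)]
      simp [Real.norm_eq_abs, sq_abs]
    rw [h1]
    have hne' : (Finset.univ : Finset (Fin d)).Nonempty := by
      rw [Finset.univ_nonempty_iff]
      exact ⟨⟨0, by exact_mod_cast hd0⟩⟩
    calc ∑ i, ((fderiv ℝ Z t₁) v i) ^ 2
        < ∑ _i : Fin d, (Δ / d * S) ^ 2 := by
          apply Finset.sum_lt_sum_of_nonempty hne'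
          intro i _
          have := hcomp i
          calc ((fderiv ℝ Z t₁) v i) ^ 2 = |(fderiv ℝ Z t₁) v i| ^ 2 := (sq_abs _).symm
            _ < (Δ / d * S) ^ 2 := by
                apply pow_lt_pow_left₀ this (abs_nonneg _)
                norm_num
      _ = d * (Δ / d * S) ^ 2 := by rw [Finset.sum_const]; simp [mul_comm]
      _ = Δ ^ 2 / d * S ^ 2 := by field_simp
      _ ≤ Δ ^ 2 / d * (d * ‖v‖ ^ 2) := by
          apply mul_le_mul_of_nonneg_left hS2 (by positivity)
      _ = Δ ^ 2 * ‖v‖ ^ 2 := by field_simp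
  have hlt : ‖(fderiv ℝ Z t₁) v‖ < Δ * ‖v‖ := by
    nlinarith [norm_nonneg ((fderiv ℝ Z t₁) v), mul_pos hΔ hnv]
  exact absurd (ha t₁ ht₁ hZ₁ v) (not_le.mpr hlt)
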